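/- arXiv:1801.05633 — 4 statements merged into one kernel-verified Lean document; each statement's English description precedes it below -/
import Mathlib

section
/- Suppose X is a crowded Hausdorff space and U_1, U_2 are nonempty, closed, disjoint subsets of X. Then the Vietoris-basic open set ⟨int(U_1), int(U_2)⟩ ∩ S_c(X) is meager (of first category) in the space S_c(X). -/
open Set Filter Topology

/-- `S` is a nontrivial convergent sequence in a topological space. -/
def IsNTCS {X : Type*} [TopologicalSpace X] (S : Set X) : Prop :=
  ∃ (x : ℕ → X) (L : X), Function.Injective x ∧
    Tendsto x atTop (𝓝 L) ∧ L ∉ Set.range x ∧ S = Set.range x ∪ {L}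

/-- The family of nontrivial convergent sequences in `X`. -/
def Sc (X : Type*) [TopologicalSpace X] : Set (Set X) := {S | IsNTCS S}

/-- The Vietoris topology on subsets of `X`, generated by the standard subbasis. -/
instance vietoris (X : Type*) [TopologicalSpace X] : TopologicalSpace (Set X) :=
  TopologicalSpace.generateFrom
    {s | (∃ U : Set X, IsOpen U ∧ s = {K : Set X | K ⊆ U}) ∨
         (∃ U : Set X, IsOpen U ∧ s = {K : Set X | (K ∩ U).Nonempty})}

section aux

variable {X : Type*} [TopologicalSpace X] [T2Space X]

lemma open_infinite (hcrowded : ∀ x : X, ¬ IsOpen ({x} : Set X))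
    {O : Set X} (hO : IsOpen O) (hne : O.Nonempty) : O.Infinite := by
  intro hfin
  obtain ⟨x, hx⟩ := hne
  apply hcrowded x
  have h1 : IsClosed (O \ {x}) := (hfin.subset diff_subset).isClosed
  have h2 : ({x} : Set X) = O ∩ (O \ {x})ᶜ := by
    ext y
    simp only [mem_singleton_iff, mem_inter_iff, mem_compl_iff, mem_diff, not_and, not_not]
    constructor
    · rintro rfl; exact ⟨hx, fun _ => rfl⟩
    · rintro ⟨hyO, hy⟩; exact hy hyO
  rw [h2]
  exact hO.inter h1.isOpen_compl

lemma IsNTCS.insert' {S : Set X} (hS : IsNTCS S) {a : X} (ha : a ∉ S) :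
    IsNTCS (insert a S) := by
  obtain ⟨x, L, hinj, htend, hL, rfl⟩ := hS
  have hax : ∀ k, a ≠ x k := by
    intro k h
    exact ha (Or.inl ⟨k, h.symm⟩)
  refine ⟨fun k => if k = 0 then a else x (k - 1), L, ?_, ?_, ?_, ?_⟩
  · intro i j h
    by_cases hi : i = 0 <;> by_cases hj : j = 0 <;> simp [hi, hj] at h ⊢
    · exact absurd h (hax _)
    · exact absurd h.symm (hax _)
    · have := hinj h; omega
  · have h1 : Tendsto (fun k : ℕ => x (k - 1)) atTop (𝓝 L) :=
      htend.comp (tendsto_sub_atTop_nat 1)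
    apply h1.congr'
    filter_upwards [eventually_ne_atTop 0] with k hk
    simp [hk]
  · rintro ⟨k, hk⟩
    by_cases h : k = 0
    · simp [h] at hk
      exact ha (hk ▸ Or.inr rfl)
    · simp [h] at hk
      exact hL ⟨k - 1, hk⟩
  · have hr : range (fun k => if k = 0 then a else x (k - 1)) = insert a (range x) := by
      ext z
      simp only [mem_range, mem_insert_iff]
      constructor
      · rintro ⟨k, rfl⟩
        by_cases h : k = 0
        · simp [h]
        · simp [h]
      · rintro (rfl | ⟨k, rfl⟩)
        · exact ⟨0, by simp⟩
        · exact ⟨k + 1, by simp⟩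
    rw [hr, Set.insert_union]

lemma IsNTCS.union_finite {S : Set X} (hS : IsNTCS S) {F : Set X} (hF : F.Finite) :
    Disjoint F S → IsNTCS (S ∪ F) := by
  refine Set.Finite.induction_on (motive := fun F _ => Disjoint F S → IsNTCS (S ∪ F)) F hF (fun _ => by simpa using hS) ?_
  intro a F haF hFfin ih hdisj
  rw [Set.union_insert]
  have h2 := ih (hdisj.mono_left (subset_insert a F))
  apply h2.insert'
  rintro (h | h)
  · exact (Set.disjoint_left.mp hdisj (mem_insert a F)) h
  · exact haF h

lemma diff_ntcs_nonempty (hcrowded : ∀ x : X, ¬ IsOpen ({x} : Set X))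
    {S : Set X} (hS : IsNTCS S) {O : Set X}
    (hO : IsOpen O) (hne : O.Nonempty) : (O \ S).Nonempty := by
  by_contra h
  rw [Set.not_nonempty_iff_eq_empty, Set.diff_eq_empty] at h
  obtain ⟨x, L, hinj, htend, hL, rfl⟩ := hS
  have hinf := open_infinite hcrowded hO hne
  obtain ⟨q, hqO, hq⟩ : ∃ q ∈ O, q ≠ L := by
    by_contra hc
    push_neg at hc
    exact hinf ((finite_singleton L).subset (fun y hy => hc y hy))
  obtain ⟨Q, N, hQ, hN, hqQ, hLN, hQN⟩ := t2_separation hq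
  have hev : ∀ᶠ k in atTop, x k ∈ N := htend (hN.mem_nhds hLN)
  have hFk : {k | x k ∉ N}.Finite := by
    rw [← Nat.cofinite_eq_atTop] at hev
    exact Filter.eventually_cofinite.mp hev
  have hsub : O ∩ Q ⊆ x '' {k | x k ∉ N} := by
    rintro y ⟨hyO, hyQ⟩
    have hyN : y ∉ N := fun hyN => (Set.disjoint_left.mp hQN hyQ) hyN
    rcases h hyO with ⟨k, rfl⟩ | rfl
    · exact ⟨k, hyN, rfl⟩
    · exact absurd hLN hyN
  exact open_infinite hcrowded (hO.inter hQ) ⟨q, hqO, hqQ⟩ ((hFk.image x).subset hsub)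

lemma diff_ntcs_infinite (hcrowded : ∀ x : X, ¬ IsOpen ({x} : Set X))
    {S : Set X} (hS : IsNTCS S) {O : Set X}
    (hO : IsOpen O) (hne : O.Nonempty) : (O \ S).Infinite := by
  intro hfin
  have hS' : IsNTCS (S ∪ (O \ S)) :=
    hS.union_finite hfin (Set.disjoint_left.mpr fun a ha h => ha.2 h)
  obtain ⟨y, hyO, hy⟩ := diff_ntcs_nonempty hcrowded hS' hO hne
  exact hy (by by_cases h : y ∈ S; exacts [Or.inl h, Or.inr ⟨hyO, h⟩])

lemma disjoint_nbhds {t : Set X} (ht : t.Finite) {O : Set X} (hO : IsOpen O) (htO : t ⊆ O) :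
    ∃ N : X → Set X, (∀ a ∈ t, IsOpen (N a) ∧ a ∈ N a ∧ N a ⊆ O) ∧
      (∀ a ∈ t, ∀ b ∈ t, a ≠ b → Disjoint (N a) (N b)) := by
  have hsep : ∀ a b : X, ∃ AB : Set X × Set X, a ≠ b →
      IsOpen AB.1 ∧ IsOpen AB.2 ∧ a ∈ AB.1 ∧ b ∈ AB.2 ∧ Disjoint AB.1 AB.2 := by
    intro a b
    by_cases h : a ≠ b
    · obtain ⟨A, B, h1, h2, h3, h4, h5⟩ := t2_separation h
      exact ⟨(A, B), fun _ => ⟨h1, h2, h3, h4, h5⟩⟩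
    · exact ⟨(univ, univ), fun h' => absurd h' h⟩
  choose AB hAB using hsep
  refine ⟨fun a => O ∩ ⋂ b ∈ t \ {a}, ((AB a b).1 ∩ (AB b a).2), ?_, ?_⟩
  · intro a ha
    have hne : ∀ b ∈ t \ {a}, b ≠ a := fun b hb => hb.2
    refine ⟨hO.inter ((ht.diff (t := {a})).isOpen_biInter fun b hb =>
      ((hAB a b (hne b hb).symm).1.inter (hAB b a (hne b hb)).2.1)), ⟨htO ha, ?_⟩,
      inter_subset_left⟩
    apply mem_iInter₂.mpr
    intro b hb
    exact ⟨(hAB a b (hne b hb).symm).2.2.1, (hAB b a (hne b hb)).2.2.2.1⟩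
  · intro a ha b hb hab
    have h1 : O ∩ ⋂ c ∈ t \ {a}, ((AB a c).1 ∩ (AB c a).2) ⊆ (AB a b).1 := fun y hy =>
      (mem_iInter₂.mp hy.2 b ⟨hb, hab.symm⟩).1
    have h2 : O ∩ ⋂ c ∈ t \ {b}, ((AB b c).1 ∩ (AB c b).2) ⊆ (AB a b).2 := fun y hy =>
      (mem_iInter₂.mp hy.2 a ⟨ha, hab⟩).2
    exact ((hAB a b hab).2.2.2.2).mono h1 h2

lemma isOpen_vietoris_sub {U : Set X} (hU : IsOpen U) : IsOpen {K : Set X | K ⊆ U} :=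
  TopologicalSpace.GenerateOpen.basic _ (Or.inl ⟨U, hU, rfl⟩)

lemma isOpen_vietoris_hit {U : Set X} (hU : IsOpen U) :
    IsOpen {K : Set X | (K ∩ U).Nonempty} :=
  TopologicalSpace.GenerateOpen.basic _ (Or.inr ⟨U, hU, rfl⟩)

end aux

section nwd

variable {X : Type*} [TopologicalSpace X] [T2Space X]

/-- Sequences meeting both `V` and `W`, with at most `n` points in `W`. -/
def smallMeet (V W : Set X) (n : ℕ) : Set (Set X) :=
  {S | S ⊆ V ∪ W ∧ (S ∩ V).Nonempty ∧ (S ∩ W).Nonempty ∧ (S ∩ W).Finite ∧ (S ∩ W).ncard ≤ n}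

lemma nwd_smallMeet (hcrowded : ∀ x : X, ¬ IsOpen ({x} : Set X))
    {V W : Set X} (hW : IsOpen W) (n : ℕ) :
    IsNowhereDense ((Subtype.val ⁻¹' smallMeet V W n : Set (Sc X))) := by
  set A : Set (Sc X) := Subtype.val ⁻¹' smallMeet V W n with hA
  rw [IsNowhereDense]
  by_contra h
  obtain ⟨s, hs⟩ := nonempty_iff_ne_empty.mpr h
  have hW₀open : IsOpen (interior (closure A)) := isOpen_interior
  have hW₀sub : interior (closure A) ⊆ closure A := interior_subset
  obtain ⟨S₀, hS₀W₀, hS₀A⟩ : (interior (closure A) ∩ A).Nonempty :=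
    mem_closure_iff.mp (hW₀sub hs) _ hW₀open hs
  obtain ⟨Ω, hΩopen, hΩeq⟩ := isOpen_induced_iff.mp hW₀open
  have hbasis := TopologicalSpace.isTopologicalBasis_of_subbasis
    (t := vietoris X) (s := {s | (∃ U : Set X, IsOpen U ∧ s = {K : Set X | K ⊆ U}) ∨
         (∃ U : Set X, IsOpen U ∧ s = {K : Set X | (K ∩ U).Nonempty})}) rfl
  have hS₀Ω : (S₀ : Set X) ∈ Ω := by rw [← hΩeq] at hS₀W₀; exact hS₀W₀
  obtain ⟨B, hBmem, hS₀B, hBΩ⟩ := hbasis.exists_subset_of_mem_open hS₀Ω hΩopen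
  obtain ⟨f, ⟨hffin, hfsub⟩, rfl⟩ := hBmem
  -- the collection of "subset-type" constraints in f
  set 𝒰 : Set (Set X) := {U | IsOpen U ∧ {K : Set X | K ⊆ U} ∈ f} with h𝒰
  have h𝒰fin : 𝒰.Finite := by
    apply Set.Finite.of_finite_image (f := fun U => {K : Set X | K ⊆ U})
    · exact hffin.subset (by rintro _ ⟨U, hU, rfl⟩; exact hU.2)
    · intro U hU U' hU' he
      simp only at he
      have h1 : U ⊆ U' := by
        have h0 : U ∈ {K : Set X | K ⊆ U} := by simp
        rw [he] at h0; exact h0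
      have h2 : U' ⊆ U := by
        have h0 : U' ∈ {K : Set X | K ⊆ U'} := by simp
        rw [← he] at h0; exact h0
      exact h1.antisymm h2
  set O : Set X := W ∩ ⋂₀ 𝒰 with hOdef
  have hOopen : IsOpen O := hW.inter (h𝒰fin.isOpen_sInter fun U hU => hU.1)
  obtain ⟨hsub0, hV0, ⟨p, hpS, hpW⟩, hfin0, hcard0⟩ := hS₀A
  have hS₀sub : ∀ U ∈ 𝒰, (S₀ : Set X) ⊆ U := fun U hU => hS₀B _ hU.2
  have hOne : O.Nonempty := ⟨p, hpW, fun U hU => hS₀sub U hU hpS⟩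
  -- pick n+1 fresh points in O
  have hinf : (O \ (S₀ : Set X)).Infinite := diff_ntcs_infinite hcrowded S₀.2 hOopen hOne
  obtain ⟨t, htsub, htfin, htcard⟩ := hinf.exists_subset_ncard_eq (n + 1)
  have htO : t ⊆ O := htsub.trans diff_subset
  obtain ⟨N, hN1, hN2⟩ := disjoint_nbhds htfin hOopen htO
  -- the enlarged sequence
  have hS' : IsNTCS ((S₀ : Set X) ∪ t) :=
    S₀.2.union_finite htfin (Set.disjoint_left.mpr fun a ha => (htsub ha).2)
  set Θ : Set (Set X) := ⋂ a ∈ t, {K : Set X | (K ∩ N a).Nonempty} with hΘ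
  have hΘopen : IsOpen Θ := htfin.isOpen_biInter fun a ha => isOpen_vietoris_hit (hN1 a ha).1
  have hS'B : (S₀ : Set X) ∪ t ∈ ⋂₀ f := by
    intro b hb
    rcases hfsub hb with ⟨U, hUopen, rfl⟩ | ⟨U, hUopen, rfl⟩
    · refine union_subset (hS₀B _ hb) ?_
      intro a ha
      exact (htO ha).2 U ⟨hUopen, hb⟩
    · exact (hS₀B _ hb).mono (inter_subset_inter_left _ subset_union_left)
  have hS'Θ : (S₀ : Set X) ∪ t ∈ Θ := by
    apply mem_iInter₂.mpr
    intro a ha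
    exact ⟨a, Or.inr ha, (hN1 a ha).2.1⟩
  -- the open set avoiding A
  set W' : Set (Sc X) := Subtype.val ⁻¹' (⋂₀ f ∩ Θ) with hW'
  have hW'open : IsOpen W' := ((hffin.isOpen_sInter fun b hb =>
      TopologicalSpace.GenerateOpen.basic _ (hfsub hb)).inter hΘopen).preimage
      continuous_subtype_val
  have hS'mem : (⟨_, hS'⟩ : Sc X) ∈ W' := ⟨hS'B, hS'Θ⟩
  have hW'sub : W' ⊆ closure A := by
    intro K hK
    apply hW₀sub
    rw [← hΩeq]
    exact hBΩ (hK.1)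
  obtain ⟨K, hKW', hKA⟩ : (W' ∩ A).Nonempty :=
    mem_closure_iff.mp (hW'sub hS'mem) _ hW'open hS'mem
  -- derive the contradiction: K has ≥ n+1 points in W
  have hsel : ∀ a : t, ∃ q, q ∈ (K : Set X) ∩ N a :=
    fun a => mem_iInter₂.mp hKW'.2 a a.2
  choose g hg using hsel
  have hginj : Function.Injective g := by
    intro a b hab
    by_contra hne
    have hvne : (a : X) ≠ (b : X) := fun h => hne (Subtype.ext h)
    exact Set.disjoint_left.mp (hN2 a a.2 b b.2 hvne) (hg a).2 (hab ▸ (hg b).2)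
  have hrange : Set.range g ⊆ (K : Set X) ∩ W := by
    rintro _ ⟨a, rfl⟩
    exact ⟨(hg a).1, ((hN1 a a.2).2.2 (hg a).2).1⟩
  obtain ⟨-, -, -, hKfin, hKcard⟩ := hKA
  have h1 : (Set.range g).ncard ≤ ((K : Set X) ∩ W).ncard :=
    Set.ncard_le_ncard hrange hKfin
  have h2 : (Set.range g).ncard = n + 1 := by
    rw [← Set.image_univ, Set.ncard_image_of_injective _ hginj, Set.ncard_univ,
      Nat.card_coe_set_eq, htcard]
  omega

end nwd

theorem stmt_7 {X : Type*} [TopologicalSpace X] [T2Space X]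
    (hcrowded : ∀ x : X, ¬ IsOpen ({x} : Set X))
    (U₁ U₂ : Set X) (hne₁ : U₁.Nonempty) (hne₂ : U₂.Nonempty)
    (hcl₁ : IsClosed U₁) (hcl₂ : IsClosed U₂) (hdisj : Disjoint U₁ U₂) :
    IsMeagre {S : (Sc X) | (S : Set X) ⊆ interior U₁ ∪ interior U₂ ∧
      ((S : Set X) ∩ interior U₁).Nonempty ∧
      ((S : Set X) ∩ interior U₂).Nonempty} := by
  set V₁ := interior U₁ with hV₁
  set V₂ := interior U₂ with hV₂
  set A₁ : ℕ → Set (Sc X) := fun n => Subtype.val ⁻¹' smallMeet V₁ V₂ n with hA₁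
  set A₂ : ℕ → Set (Sc X) := fun n => Subtype.val ⁻¹' smallMeet V₂ V₁ n with hA₂
  have hsub : {S : (Sc X) | (S : Set X) ⊆ V₁ ∪ V₂ ∧
      ((S : Set X) ∩ V₁).Nonempty ∧ ((S : Set X) ∩ V₂).Nonempty} ⊆
      ⋃ n, (A₁ n ∪ A₂ n) := by
    rintro S ⟨h1, h2, h3⟩
    obtain ⟨x, L, hinj, htend, hL, hSeq⟩ := S.2
    have hgen : ∀ C : Set X, IsClosed C → L ∉ C → ((S : Set X) ∩ C).Finite := by
      intro C hC hLC
      have hfin : {k | x k ∈ C}.Finite := by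
        by_contra hinf
        exact hLC (hC.mem_of_frequently_of_tendsto
          (Nat.frequently_atTop_iff_infinite.mpr hinf) htend)
      apply (hfin.image x).subset
      rintro y ⟨hyS, hyC⟩
      rw [hSeq] at hyS
      rcases hyS with ⟨k, rfl⟩ | rfl
      · exact ⟨k, hyC, rfl⟩
      · exact absurd hyC hLC
    have hLS : L ∈ (S : Set X) := by rw [hSeq]; exact Or.inr rfl
    rcases h1 hLS with hL1 | hL2
    · have hfin2 : ((S : Set X) ∩ V₂).Finite :=
        ((hgen U₂ hcl₂ fun h => Set.disjoint_left.mp hdisj (interior_subset hL1) h).subset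
          (inter_subset_inter_right _ interior_subset))
      exact mem_iUnion.mpr ⟨((S : Set X) ∩ V₂).ncard,
        Or.inl ⟨h1, h2, h3, hfin2, le_rfl⟩⟩
    · have hfin2 : ((S : Set X) ∩ V₁).Finite :=
        ((hgen U₁ hcl₁ fun h => Set.disjoint_left.mp hdisj h (interior_subset hL2)).subset
          (inter_subset_inter_right _ interior_subset))
      exact mem_iUnion.mpr ⟨((S : Set X) ∩ V₁).ncard,
        Or.inr ⟨by rwa [union_comm], h3, h2, hfin2, le_rfl⟩⟩
  have hmeagre : ∀ n, IsMeagre (A₁ n ∪ A₂ n) := by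
    intro n
    have h1 : IsNowhereDense (A₁ n) := nwd_smallMeet hcrowded isOpen_interior n
    have h2 : IsNowhereDense (A₂ n) := nwd_smallMeet hcrowded isOpen_interior n
    apply isMeagre_iff_countable_union_isNowhereDense.mpr
    refine ⟨{A₁ n, A₂ n}, ?_, (countable_singleton _).insert _, ?_⟩
    · rintro t (rfl | rfl) <;> assumption
    · rw [sUnion_insert, sUnion_singleton]
  exact (isMeagre_iUnion hmeagre).mono hsub
end

section
/- If X is a regular Hausdorff crowded space (no isolated points), then the space S_c(X) of nontrivial convergent sequences in X, equipped with the Vietoris topology, is of the first category in itself (i.e., S_c(X) is meager in itself). -/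
open Set Filter Topology

namespace ScMeagre

variable {X : Type*} [TopologicalSpace X]

lemma isOpen_vsub {U : Set X} (hU : IsOpen U) : IsOpen {K : Set X | K ⊆ U} :=
  TopologicalSpace.GenerateOpen.basic _ (Or.inl ⟨U, hU, rfl⟩)

lemma isOpen_vmeet {U : Set X} (hU : IsOpen U) : IsOpen {K : Set X | (K ∩ U).Nonempty} :=
  TopologicalSpace.GenerateOpen.basic _ (Or.inr ⟨U, hU, rfl⟩)

lemma basic_normal {f : Set (Set (Set X))} (hfin : f.Finite) :
    f ⊆ {s | (∃ U : Set X, IsOpen U ∧ s = {K : Set X | K ⊆ U}) ∨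
         (∃ U : Set X, IsOpen U ∧ s = {K : Set X | (K ∩ U).Nonempty})} →
    ∃ (V : Set X) (F : Set (Set X)), IsOpen V ∧ F.Finite ∧ (∀ W ∈ F, IsOpen W) ∧
      ∀ K : Set X, K ∈ ⋂₀ f ↔ (K ⊆ V ∧ ∀ W ∈ F, (K ∩ W).Nonempty) := by
  refine Set.Finite.induction_on (motive := fun g _ => g ⊆ {s | (∃ U : Set X, IsOpen U ∧ s = {K : Set X | K ⊆ U}) ∨
         (∃ U : Set X, IsOpen U ∧ s = {K : Set X | (K ∩ U).Nonempty})} →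
    ∃ (V : Set X) (F : Set (Set X)), IsOpen V ∧ F.Finite ∧ (∀ W ∈ F, IsOpen W) ∧
      ∀ K : Set X, K ∈ ⋂₀ g ↔ (K ⊆ V ∧ ∀ W ∈ F, (K ∩ W).Nonempty)) f hfin
    (fun _ => ⟨univ, ∅, isOpen_univ, finite_empty, by simp, by simp⟩) ?_
  intro t f htf hfin ih hsub
  obtain ⟨V, F, hVo, hFfin, hFo, hiff⟩ := ih (fun u hu => hsub (mem_insert_of_mem _ hu))
  rcases hsub (mem_insert _ _) with ⟨U, hUo, rfl⟩ | ⟨U, hUo, rfl⟩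
  · refine ⟨U ∩ V, F, hUo.inter hVo, hFfin, hFo, fun K => ?_⟩
    rw [sInter_insert]
    constructor
    · rintro ⟨h1, h2⟩
      obtain ⟨hV, hF⟩ := (hiff K).1 h2
      exact ⟨subset_inter h1 hV, hF⟩
    · rintro ⟨h1, h2⟩
      exact ⟨h1.trans inter_subset_left, (hiff K).2 ⟨h1.trans inter_subset_right, h2⟩⟩
  · refine ⟨V, insert U F, hVo, hFfin.insert U, ?_, fun K => ?_⟩
    · rintro W (rfl | hW)
      · exact hUo
      · exact hFo W hW
    rw [sInter_insert]
    constructor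
    · rintro ⟨h1, h2⟩
      obtain ⟨hV, hF⟩ := (hiff K).1 h2
      refine ⟨hV, ?_⟩
      rintro W (rfl | hW)
      · exact h1
      · exact hF W hW
    · rintro ⟨h1, h2⟩
      exact ⟨h2 U (mem_insert _ _), (hiff K).2 ⟨h1, fun W hW => h2 W (mem_insert_of_mem _ hW)⟩⟩

lemma exists_basic {O : Set (Set X)} (hO : IsOpen O) {S : Set X} (hS : S ∈ O) :
    ∃ (V : Set X) (F : Set (Set X)), IsOpen V ∧ F.Finite ∧ (∀ W ∈ F, IsOpen W) ∧
      S ⊆ V ∧ (∀ W ∈ F, (S ∩ W).Nonempty) ∧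
      ∀ K : Set X, K ⊆ V → (∀ W ∈ F, (K ∩ W).Nonempty) → K ∈ O := by
  have hb := TopologicalSpace.isTopologicalBasis_of_subbasis (t := vietoris X)
    (s := {s | (∃ U : Set X, IsOpen U ∧ s = {K : Set X | K ⊆ U}) ∨
         (∃ U : Set X, IsOpen U ∧ s = {K : Set X | (K ∩ U).Nonempty})}) rfl
  obtain ⟨B, hBmem, hSB, hBO⟩ := hb.exists_subset_of_mem_open hS hO
  obtain ⟨f, ⟨hfin, hsub⟩, rfl⟩ := hBmem
  obtain ⟨V, F, hVo, hFfin, hFo, hiff⟩ := basic_normal hfin hsub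
  obtain ⟨hSV, hSF⟩ := (hiff S).1 hSB
  exact ⟨V, F, hVo, hFfin, hFo, hSV, hSF, fun K h1 h2 => hBO ((hiff K).2 ⟨h1, h2⟩)⟩


section chunk2
open Function

variable {X : Type*} [TopologicalSpace X]

lemma ntcs_nonempty {S : Set X} (h : IsNTCS S) : S.Nonempty := by
  obtain ⟨x, L, _, _, _, rfl⟩ := h
  exact ⟨L, Or.inr rfl⟩

lemma ntcs_insert {S : Set X} (h : IsNTCS S) (a : X) : IsNTCS (insert a S) := by
  by_cases ha : a ∈ S
  · rwa [Set.insert_eq_self.2 ha]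
  obtain ⟨x, L, hinj, htd, hL, rfl⟩ := h
  have haL : a ≠ L := fun e => ha (Or.inr (by simp [e]))
  have hax : a ∉ range x := fun e => ha (Or.inl e)
  set y : ℕ → X := fun n => Nat.rec a (fun k _ => x k) n with hy
  have hry : range y = insert a (range x) := by
    ext z
    constructor
    · rintro ⟨n, rfl⟩
      cases n with
      | zero => exact Or.inl rfl
      | succ k => exact Or.inr ⟨k, rfl⟩
    · rintro (rfl | ⟨k, rfl⟩)
      · exact ⟨0, rfl⟩
      · exact ⟨k + 1, rfl⟩
  refine ⟨y, L, ?_, ?_, ?_, ?_⟩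
  · intro m n hmn
    cases m with
    | zero =>
      cases n with
      | zero => rfl
      | succ k => exact absurd hmn (fun e => hax ⟨k, e.symm⟩)
    | succ j =>
      cases n with
      | zero => exact absurd hmn (fun e => hax ⟨j, e⟩)
      | succ k => exact congrArg Nat.succ (hinj hmn)
  · rw [← Filter.tendsto_add_atTop_iff_nat 1]
    exact htd
  · rw [hry]
    rintro (rfl | hr)
    · exact haL rfl
    · exact hL hr
  · rw [hry, Set.insert_union]

lemma seq_diff_finite {x : ℕ → X} {L : X} (htd : Filter.Tendsto x Filter.atTop (nhds L))
    {W : Set X} (hW : W ∈ nhds L) : ((range x ∪ {L}) \ W).Finite := by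
  have h1 : {n | x n ∉ W}.Finite := by
    have h : x ⁻¹' W ∈ Filter.atTop := htd hW
    rw [← Nat.cofinite_eq_atTop, Filter.mem_cofinite] at h
    exact h.subset (fun n hn => hn)
  have h2 : (range x ∪ {L}) \ W ⊆ x '' {n | x n ∉ W} := by
    rintro z ⟨hz, hzW⟩
    rcases hz with ⟨n, rfl⟩ | hzL
    · exact ⟨n, hzW, rfl⟩
    · exact absurd (Set.mem_singleton_iff.1 hzL ▸ mem_of_mem_nhds hW) hzW
  exact (h1.image x).subset h2

lemma open_infinite (hcrowded : ∀ x : X, ¬ IsOpen ({x} : Set X)) [T1Space X]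
    {O : Set X} (hO : IsOpen O) (hne : O.Nonempty) : O.Infinite := by
  intro hfin
  obtain ⟨x, hx⟩ := hne
  have h1 : IsClosed (O \ {x}) := (hfin.subset Set.diff_subset).isClosed
  have h2 : ({x} : Set X) = O ∩ (O \ {x})ᶜ := by
    ext y
    simp only [Set.mem_singleton_iff, Set.mem_inter_iff, Set.mem_compl_iff, Set.mem_diff,
      Set.mem_singleton_iff, not_and, not_not]
    constructor
    · rintro rfl
      exact ⟨hx, fun _ => rfl⟩
    · rintro ⟨hyO, h⟩
      exact h hyO
  exact hcrowded x (h2 ▸ hO.inter h1.isOpen_compl)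

lemma quad_sep [T2Space X] [RegularSpace X] {x : Fin 4 → X} (hinj : Function.Injective x)
    {W : Fin 4 → Set X} (hWo : ∀ i, IsOpen (W i)) (hxW : ∀ i, x i ∈ W i) :
    ∃ A : Fin 4 → Set X, (∀ i, IsOpen (A i)) ∧ (∀ i, x i ∈ A i) ∧
      (∀ i, closure (A i) ⊆ W i) ∧ ∀ i j, i ≠ j → Disjoint (closure (A i)) (closure (A j)) := by
  classical
  have hsep : ∀ i j : Fin 4, i ≠ j → ∃ u v : Set X,
      IsOpen u ∧ IsOpen v ∧ x i ∈ u ∧ x j ∈ v ∧ Disjoint u v :=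
    fun i j hij => t2_separation (hinj.ne hij)
  choose P Q hPo hQo hxP hxQ hPQ using hsep
  set D : Fin 4 → Fin 4 → Set X :=
    fun i j => if h : i = j then Set.univ else P i j h ∩ Q j i (fun e => h e.symm) with hD
  have hDo : ∀ i j, IsOpen (D i j) := by
    intro i j
    rw [hD]
    by_cases h : i = j
    · simp [h]
    · simp only [dif_neg h]
      exact (hPo i j h).inter (hQo j i _)
  have hxD : ∀ i j, x i ∈ D i j := by
    intro i j
    rw [hD]
    by_cases h : i = j
    · simp [h]
    · simp only [dif_neg h]
      exact ⟨hxP i j h, hxQ j i _⟩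
  set U : Fin 4 → Set X := fun i => W i ∩ ⋂ j, D i j with hU
  have hUo : ∀ i, IsOpen (U i) :=
    fun i => (hWo i).inter (isOpen_iInter_of_finite fun j => hDo i j)
  have hxU : ∀ i, x i ∈ U i := fun i => ⟨hxW i, Set.mem_iInter.2 fun j => hxD i j⟩
  have hDsub1 : ∀ (i j : Fin 4) (h : i ≠ j), D i j ⊆ P i j h := by
    intro i j h
    simp only [hD]
    rw [dif_neg h]
    exact Set.inter_subset_left
  have hDsub2 : ∀ (i j : Fin 4) (h : i ≠ j), D j i ⊆ Q i j h := by
    intro i j h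
    simp only [hD]
    rw [dif_neg (show ¬ j = i from fun e => h e.symm)]
    exact Set.inter_subset_right
  have hUdisj : ∀ i j, i ≠ j → Disjoint (U i) (U j) := by
    intro i j hij
    refine Set.disjoint_left.2 fun z hzi hzj => ?_
    have hz1 : z ∈ P i j hij := hDsub1 i j hij (Set.mem_iInter.1 hzi.2 j)
    have hz2 : z ∈ Q i j hij := hDsub2 i j hij (Set.mem_iInter.1 hzj.2 i)
    exact Set.disjoint_left.1 (hPQ i j hij) hz1 hz2
  have hshrink : ∀ i, ∃ A : Set X, IsOpen A ∧ x i ∈ A ∧ closure A ⊆ U i := by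
    intro i
    obtain ⟨t, htn, htc, hts⟩ := exists_mem_nhds_isClosed_subset ((hUo i).mem_nhds (hxU i))
    refine ⟨interior t, isOpen_interior, mem_interior_iff_mem_nhds.2 htn, ?_⟩
    exact (closure_minimal interior_subset htc).trans hts
  choose A hAo hxA hAcl using hshrink
  refine ⟨A, hAo, hxA, fun i => (hAcl i).trans Set.inter_subset_left, fun i j hij => ?_⟩
  exact (hUdisj i j hij).mono (hAcl i) (hAcl j)

end chunk2


section chunk3

variable {X : Type*} [TopologicalSpace X]

structure VNode (X : Type*) [TopologicalSpace X] where
  V : Set X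
  hV : IsOpen V
  F : Set (Set X)
  hFfin : F.Finite
  hFopen : ∀ W ∈ F, IsOpen W
  A : Fin 4 → Set X
  hAopen : ∀ i, IsOpen (A i)
  hAdisj : ∀ i j, i ≠ j → Disjoint (closure (A i)) (closure (A j))

def VNode.M (N : VNode X) : Set (Set X) :=
  {K | K ⊆ N.V ∧ (∀ W ∈ N.F, (K ∩ W).Nonempty) ∧ ∀ i : Fin 4, (K ∩ N.A i).Nonempty}

lemma VNode.isOpen_M (N : VNode X) : IsOpen N.M := by
  have he : N.M = {K : Set X | K ⊆ N.V} ∩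
      ((⋂ W ∈ N.F, {K : Set X | (K ∩ W).Nonempty}) ∩
        ⋂ i : Fin 4, {K : Set X | (K ∩ N.A i).Nonempty}) := by
    ext K
    simp only [VNode.M, Set.mem_setOf_eq, Set.mem_inter_iff, Set.mem_iInter, Set.mem_setOf_eq]
  rw [he]
  exact (isOpen_vsub N.hV).inter
    ((N.hFfin.isOpen_biInter fun W hW => isOpen_vmeet (N.hFopen W hW)).inter
      (isOpen_iInter_of_finite fun i => isOpen_vmeet (N.hAopen i)))

def trace (C : VNode X) : Set (Set X) := C.M ∩ Sc X

def VChild (P C : VNode X) : Prop :=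
  C.M ⊆ P.M ∧ closure (C.A 0) ⊆ P.A 0 ∧ closure (C.A 1) ⊆ P.A 0 ∧
    closure (C.A 2) ⊆ P.A 2 ∧ closure (C.A 3) ⊆ P.A 2

lemma refineNode [T2Space X] [RegularSpace X]
    (hcrowded : ∀ x : X, ¬ IsOpen ({x} : Set X))
    {O : Set (Set X)} (hO : IsOpen O) {S : Set X} (hS : S ∈ O) (hSc : IsNTCS S)
    {T0 T2 : Set X} (h0o : IsOpen T0) (h2o : IsOpen T2)
    (h0 : (S ∩ T0).Nonempty) (h2 : (S ∩ T2).Nonempty) :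
    ∃ C : VNode X, C.M ⊆ O ∧ (trace C).Nonempty ∧
      closure (C.A 0) ⊆ T0 ∧ closure (C.A 1) ⊆ T0 ∧
      closure (C.A 2) ⊆ T2 ∧ closure (C.A 3) ⊆ T2 := by
  classical
  obtain ⟨V, F, hVo, hFfin, hFo, hSV, hSF, hbasic⟩ := exists_basic hO hS
  obtain ⟨p0, hp0S, hp0T⟩ := h0
  obtain ⟨p2, hp2S, hp2T⟩ := h2
  have hT0V : (T0 ∩ V).Nonempty := ⟨p0, hp0T, hSV hp0S⟩
  have hT2V : (T2 ∩ V).Nonempty := ⟨p2, hp2T, hSV hp2S⟩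
  have hi0 : (T0 ∩ V).Infinite := open_infinite hcrowded (h0o.inter hVo) hT0V
  have hi2 : (T2 ∩ V).Infinite := open_infinite hcrowded (h2o.inter hVo) hT2V
  obtain ⟨x0, hx0⟩ := hT0V
  obtain ⟨x1, hx1m, hx1d⟩ := (hi0.diff (Set.finite_singleton x0)).nonempty
  obtain ⟨x2, hx2m, hx2d⟩ := (hi2.diff ((Set.finite_singleton x0).insert x1)).nonempty
  obtain ⟨x3, hx3m, hx3d⟩ := (hi2.diff (((Set.finite_singleton x0).insert x1).insert x2)).nonempty
  simp only [Set.mem_insert_iff, Set.mem_singleton_iff, not_or] at hx1d hx2d hx3d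
  set pts : Fin 4 → X := ![x0, x1, x2, x3] with hpts
  set Wf : Fin 4 → Set X := ![T0 ∩ V, T0 ∩ V, T2 ∩ V, T2 ∩ V] with hWf
  have hptsInj : Function.Injective pts := by
    intro i j hij
    fin_cases i <;> fin_cases j <;> simp_all [hpts] <;> tauto
  have hWfo : ∀ i, IsOpen (Wf i) := by
    intro i
    fin_cases i <;> simp [hWf, h0o.inter hVo, h2o.inter hVo]
  have hxWf : ∀ i, pts i ∈ Wf i := by
    intro i
    fin_cases i <;> simp [hpts, hWf, hx0, hx1m, hx2m, hx3m]
  obtain ⟨A, hAo, hxA, hAcl, hAdisj⟩ := quad_sep hptsInj hWfo hxWf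
  set C : VNode X := ⟨V, hVo, F, hFfin, hFo, A, hAo, hAdisj⟩ with hC
  have hMsub : C.M ⊆ O := fun K hK => hbasic K hK.1 hK.2.1
  have hclT : ∀ i, closure (A i) ⊆ Wf i := hAcl
  have hptsV : ∀ i, pts i ∈ V := by
    intro i
    fin_cases i <;> simp [hpts] <;> [exact hx0.2; exact hx1m.2; exact hx2m.2; exact hx3m.2]
  set S' : Set X := insert x0 (insert x1 (insert x2 (insert x3 S))) with hS'
  have hS'c : IsNTCS S' := ntcs_insert (ntcs_insert (ntcs_insert (ntcs_insert hSc x3) x2) x1) x0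
  have hSsub : S ⊆ S' := by
    intro z hz
    exact Or.inr (Or.inr (Or.inr (Or.inr hz)))
  have hptsS' : ∀ i, pts i ∈ S' := by
    intro i
    fin_cases i <;> simp [hpts, hS']
  have hS'M : S' ∈ C.M := by
    refine ⟨?_, ?_, ?_⟩
    · rw [hS']
      refine Set.insert_subset (hptsV 0) (Set.insert_subset (hptsV 1)
        (Set.insert_subset (hptsV 2) (Set.insert_subset (hptsV 3) hSV)))
    · intro W hW
      obtain ⟨z, hz⟩ := hSF W hW
      exact ⟨z, hSsub hz.1, hz.2⟩
    · intro i
      exact ⟨pts i, hptsS' i, hxA i⟩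
  refine ⟨C, hMsub, ⟨S', hS'M, hS'c⟩, ?_, ?_, ?_, ?_⟩
  · exact (hclT 0).trans (by simp [hWf])
  · exact (hclT 1).trans (by simp [hWf])
  · exact (hclT 2).trans (by simp [hWf])
  · exact (hclT 3).trans (by simp [hWf])

end chunk3


section chunk4

variable {X : Type*} [TopologicalSpace X]

structure Stage (X : Type*) [TopologicalSpace X] where
  fam : Set (VNode X)
  disj : fam.Pairwise fun C D => Disjoint (trace C) (trace D)
  dense : ∀ O : Set (Set X), IsOpen O → (O ∩ Sc X).Nonempty →
    ∃ C ∈ fam, (O ∩ trace C).Nonempty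

lemma exists_stage (good : Set (VNode X))
    (hgood : ∀ O : Set (Set X), IsOpen O → (O ∩ Sc X).Nonempty →
      ∃ C ∈ good, C.M ⊆ O ∧ (trace C).Nonempty) :
    ∃ s : Stage X, s.fam ⊆ good := by
  classical
  set SS : Set (Set (VNode X)) :=
    {𝔘 | 𝔘 ⊆ good ∧ (∀ C ∈ 𝔘, (trace C).Nonempty) ∧
      𝔘.Pairwise fun C D => Disjoint (trace C) (trace D)} with hSS
  have hch : ∀ c ⊆ SS, IsChain (· ⊆ ·) c → ∃ ub ∈ SS, ∀ s ∈ c, s ⊆ ub := by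
    intro c hcSS hchain
    refine ⟨⋃₀ c, ⟨?_, ?_, ?_⟩, fun s hs => Set.subset_sUnion_of_mem hs⟩
    · exact Set.sUnion_subset fun u hu => (hcSS hu).1
    · rintro C ⟨u, hu, hCu⟩
      exact (hcSS hu).2.1 C hCu
    · rintro C ⟨u, hu, hCu⟩ D ⟨v, hv, hDv⟩ hCD
      rcases eq_or_ne u v with rfl | huv
      · exact (hcSS hu).2.2 hCu hDv hCD
      · rcases hchain hu hv huv with h | h
        · exact (hcSS hv).2.2 (h hCu) hDv hCD
        · exact (hcSS hu).2.2 hCu (h hDv) hCD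
  obtain ⟨m, hm⟩ := zorn_subset SS hch
  · have hmSS : m ∈ SS := hm.prop
    refine ⟨⟨m, hmSS.2.2, ?_⟩, hmSS.1⟩
    intro O hOo hOne
    by_contra hc
    push_neg at hc
    have hempty : ∀ C ∈ m, O ∩ trace C = ∅ := hc
    obtain ⟨C₀, hCg, hCO, hCne⟩ := hgood O hOo hOne
    have hdisj0 : ∀ D ∈ m, Disjoint (trace C₀) (trace D) := by
      intro D hD
      refine Set.disjoint_left.2 fun K hK1 hK2 => ?_
      have : K ∈ O ∩ trace D := ⟨hCO hK1.1, hK2⟩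
      rw [hempty D hD] at this
      exact this
    have hnotm : C₀ ∉ m := by
      intro h
      obtain ⟨K, hK⟩ := hCne
      have : K ∈ O ∩ trace C₀ := ⟨hCO hK.1, hK⟩
      rw [hempty C₀ h] at this
      exact this
    have hins : insert C₀ m ∈ SS := by
      refine ⟨Set.insert_subset hCg hmSS.1, ?_, ?_⟩
      · rintro C (rfl | hC)
        · exact hCne
        · exact hmSS.2.1 C hC
      · haveI : Std.Symm (fun C D : VNode X => Disjoint (trace C) (trace D)) :=
          ⟨fun a b hab => hab.symm⟩
        rw [Set.pairwise_insert_of_symm]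
        exact ⟨hmSS.2.2, fun D hD _ => hdisj0 D hD⟩
    have := hm.2 hins (Set.subset_insert _ _)
    exact hnotm (this (Set.mem_insert _ _))

def stepGood (s : Stage X) : Set (VNode X) := {C | ∃ P ∈ s.fam, VChild P C}

lemma stepGood_spec [T2Space X] [RegularSpace X]
    (hcrowded : ∀ x : X, ¬ IsOpen ({x} : Set X)) (s : Stage X) :
    ∀ O : Set (Set X), IsOpen O → (O ∩ Sc X).Nonempty →
      ∃ C ∈ stepGood s, C.M ⊆ O ∧ (trace C).Nonempty := by
  intro O hOo hOne
  obtain ⟨P, hPfam, K, hKO, hKM, hKSc⟩ := s.dense O hOo hOne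
  have hKO' : K ∈ O ∩ P.M := ⟨hKO, hKM⟩
  obtain ⟨C, hCO, hCne, hc0, hc1, hc2, hc3⟩ :=
    refineNode hcrowded (hOo.inter P.isOpen_M) hKO' hKSc (P.hAopen 0) (P.hAopen 2)
      (hKM.2.2 0) (hKM.2.2 2)
  refine ⟨C, ⟨P, hPfam, fun K' hK' => (hCO hK').2, hc0, hc1, hc2, hc3⟩,
    fun K' hK' => (hCO hK').1, hCne⟩

lemma base_spec [T2Space X] [RegularSpace X]
    (hcrowded : ∀ x : X, ¬ IsOpen ({x} : Set X)) :
    ∀ O : Set (Set X), IsOpen O → (O ∩ Sc X).Nonempty →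
      ∃ C ∈ (Set.univ : Set (VNode X)), C.M ⊆ O ∧ (trace C).Nonempty := by
  intro O hOo hOne
  obtain ⟨K, hKO, hKSc⟩ := hOne
  have hne : (K ∩ (Set.univ : Set X)).Nonempty := by
    rw [Set.inter_univ]
    exact ntcs_nonempty hKSc
  obtain ⟨C, hCO, hCne, _, _, _, _⟩ :=
    refineNode hcrowded hOo hKO hKSc isOpen_univ isOpen_univ hne hne
  exact ⟨C, Set.mem_univ C, hCO, hCne⟩

end chunk4

end ScMeagre

open ScMeagre in
theorem stmt_8 {X : Type*} [TopologicalSpace X] [T2Space X] [RegularSpace X]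
    (hcrowded : ∀ x : X, ¬ IsOpen ({x} : Set X)) :
    IsMeagre (Set.univ : Set (Sc X)) := by
  classical
  obtain ⟨s0, -⟩ := exists_stage (Set.univ : Set (VNode X)) (base_spec hcrowded)
  have hnext : ∀ s : Stage X, ∃ t : Stage X, t.fam ⊆ stepGood s :=
    fun s => exists_stage (stepGood s) (stepGood_spec hcrowded s)
  choose next hnextspec using hnext
  set stages : ℕ → Stage X := fun n => Nat.rec s0 (fun _ s => next s) n with hstages
  have hstep : ∀ n, (stages (n + 1)).fam ⊆ stepGood (stages n) := fun n => hnextspec _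
  set G : ℕ → Set (↥(Sc X)) :=
    fun n => {S : ↥(Sc X) | ∃ C ∈ (stages n).fam, (S : Set X) ∈ C.M} with hG
  have hGopen : ∀ n, IsOpen (G n) := by
    intro n
    have he : G n = (Subtype.val : ↥(Sc X) → Set X) ⁻¹' (⋃ C ∈ (stages n).fam, C.M) := by
      ext S
      simp [hG]
    rw [he]
    exact (isOpen_biUnion fun C _ => C.isOpen_M).preimage continuous_subtype_val
  have hGdense : ∀ n, Dense (G n) := by
    intro n
    rw [dense_iff_inter_open]
    rintro U hU ⟨S0, hS0U⟩
    obtain ⟨O, hOo, rfl⟩ := isOpen_induced_iff.1 hU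
    obtain ⟨C, hCfam, K, hKO, hKM, hKSc⟩ :=
      (stages n).dense O hOo ⟨(S0 : Set X), hS0U, S0.2⟩
    exact ⟨⟨K, hKSc⟩, hKO, C, hCfam, hKM⟩
  have hGempty : (⋂ n, G n) = ∅ := by
    rw [Set.eq_empty_iff_forall_notMem]
    intro S hSmem
    rw [Set.mem_iInter] at hSmem
    have hSmem' : ∀ n, ∃ C ∈ (stages n).fam, (S : Set X) ∈ C.M := fun n => hSmem n
    choose N hNf hNM using hSmem'
    have hchild : ∀ n, VChild (N n) (N (n + 1)) := by
      intro n
      obtain ⟨P, hPf, hPC⟩ := hstep n (hNf (n + 1))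
      have hSP : (S : Set X) ∈ trace P := ⟨hPC.1 (hNM (n + 1)), S.2⟩
      have hPN : P = N n := by
        by_contra hne
        exact Set.disjoint_left.1 ((stages n).disj hPf (hNf n) hne) hSP ⟨hNM n, S.2⟩
      rwa [hPN] at hPC
    obtain ⟨x, L, hinj, htd, hLx, hSeq⟩ := S.2
    have key : ∀ a b : Fin 4, (∀ n, closure ((N (n + 1)).A a) ⊆ (N n).A a) →
        (∀ n, closure ((N (n + 1)).A b) ⊆ (N n).A a) → a ≠ b →
        L ∈ closure ((N 0).A a) := by
      intro a b hca hcb hab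
      have hmono : ∀ m n, n ≤ m → (N m).A a ⊆ (N n).A a := by
        intro m n h
        induction h with
        | refl => exact fun z hz => hz
        | @step m' h ih => exact (subset_closure.trans (hca m')).trans ih
      rw [mem_closure_iff]
      intro W hWo hLW
      have hpt : ∀ m : ℕ, ((S : Set X) ∩ (N (m + 1)).A b).Nonempty :=
        fun m => (hNM (m + 1)).2.2 b
      choose s hsS hsA using hpt
      have hslt : ∀ m m', m < m' → s m ≠ s m' := by
        intro m m' hmm' he
        have h1 : s m' ∈ (N (m + 1)).A a :=
          hmono m' (m + 1) hmm' ((hcb m') (subset_closure (hsA m')))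
        have h2 : s m' ∈ (N (m + 1)).A b := he ▸ hsA m
        exact Set.disjoint_left.1 ((N (m + 1)).hAdisj a b hab)
          (subset_closure h1) (subset_closure h2)
      have hsinj : Function.Injective s := by
        intro m m' he
        rcases lt_trichotomy m m' with h | h | h
        · exact absurd he (hslt m m' h)
        · exact h
        · exact absurd he.symm (hslt m' m h)
      have hfin : ((Set.range x ∪ {L}) \ W).Finite := seq_diff_finite htd (hWo.mem_nhds hLW)
      have hex : ∃ m, s m ∈ W := by
        by_contra hc
        push_neg at hc
        have hsub : Set.range s ⊆ (Set.range x ∪ {L}) \ W := by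
          rintro z ⟨m, rfl⟩
          exact ⟨hSeq ▸ hsS m, hc m⟩
        exact (Set.infinite_range_of_injective hsinj) (hfin.subset hsub)
      obtain ⟨m, hmW⟩ := hex
      exact ⟨s m, hmW, hmono m 0 (Nat.zero_le m) ((hcb m) (subset_closure (hsA m)))⟩
    have hL0 : L ∈ closure ((N 0).A 0) :=
      key 0 1 (fun n => (hchild n).2.1) (fun n => (hchild n).2.2.1) (by decide)
    have hL2 : L ∈ closure ((N 0).A 2) :=
      key 2 3 (fun n => (hchild n).2.2.2.1) (fun n => (hchild n).2.2.2.2) (by decide)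
    exact Set.disjoint_left.1 ((N 0).hAdisj 0 2 (by decide)) hL0 hL2
  show (Set.univ : Set (Sc X))ᶜ ∈ residual ↥(Sc X)
  rw [Set.compl_univ, mem_residual_iff]
  refine ⟨Set.range G, ?_, ?_, Set.countable_range G, ?_⟩
  · rintro t ⟨n, rfl⟩
    exact hGopen n
  · rintro t ⟨n, rfl⟩
    exact hGdense n
  · rw [Set.sInter_range, hGempty]
end

section
/- If X is a regular Hausdorff crowded space with S_c(X) nonempty, then S_c(X) with the Vietoris topology is not a Baire space. -/
open Set Filter Topology

namespace ScAux

variable {X : Type*} [TopologicalSpace X]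

lemma isOpen_hit (U : Set X) (hU : IsOpen U) :
    IsOpen {K : Set X | (K ∩ U).Nonempty} :=
  TopologicalSpace.GenerateOpen.basic _ (Or.inr ⟨U, hU, rfl⟩)

lemma isOpen_sub (U : Set X) (hU : IsOpen U) :
    IsOpen {K : Set X | K ⊆ U} :=
  TopologicalSpace.GenerateOpen.basic _ (Or.inl ⟨U, hU, rfl⟩)

/-- The auxiliary dense open sets. -/
def Dn (C P : Set X) (n : ℕ) : Set (Set X) :=
  {K | K ∩ C = ∅} ∪
    ⋃ (B : Fin n → Set X) (_ : (∀ i, IsOpen (B i) ∧ B i ⊆ P) ∧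
        Pairwise (Function.onFun Disjoint B)),
      ⋂ i, {K : Set X | (K ∩ B i).Nonempty}

lemma isOpen_Dn {C P : Set X} (hC : IsClosed C) (n : ℕ) : IsOpen (Dn C P n) := by
  apply IsOpen.union
  · have h : {K : Set X | K ∩ C = ∅} = {K : Set X | K ⊆ Cᶜ} := by
      ext K
      simp only [Set.mem_setOf_eq, Set.eq_empty_iff_forall_notMem, Set.mem_inter_iff,
        Set.subset_def, Set.mem_compl_iff]
      tauto
    rw [h]
    exact isOpen_sub _ hC.isOpen_compl
  · apply isOpen_iUnion; intro B; apply isOpen_iUnion; intro hB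
    exact isOpen_iInter_of_finite fun i => isOpen_hit _ (hB.1 i).1

lemma ntcs_insert_point {S : Set X} {y : X} (hS : IsNTCS S) (hy : y ∉ S) :
    IsNTCS (insert y S) := by
  obtain ⟨x, L, hinj, htend, hL, rfl⟩ := hS
  have hyx : y ∉ Set.range x := fun h => hy (Or.inl h)
  have hyL : y ≠ L := fun h => hy (Or.inr h)
  refine ⟨fun n => Nat.casesOn n y x, L, ?_, ?_, ?_, ?_⟩
  · intro a b hab
    match a, b with
    | 0, 0 => rfl
    | 0, b + 1 => exact absurd ⟨b, hab.symm⟩ hyx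
    | a + 1, 0 => exact absurd ⟨a, hab⟩ hyx
    | a + 1, b + 1 => exact congrArg Nat.succ (hinj hab)
  · exact (tendsto_add_atTop_iff_nat 1).mp htend
  · rintro ⟨k, hk⟩
    match k with
    | 0 => exact hyL hk
    | k + 1 => exact hL ⟨k, hk⟩
  · have hr : Set.range (fun n => (Nat.casesOn n y x : X)) = insert y (Set.range x) := by
      ext z
      constructor
      · rintro ⟨k, hk⟩
        match k with
        | 0 => exact Or.inl hk.symm
        | k + 1 => exact Or.inr ⟨k, hk⟩
      · rintro (rfl | ⟨k, hk⟩)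
        · exact ⟨0, rfl⟩
        · exact ⟨k + 1, hk⟩
    rw [hr, Set.insert_union]

lemma ntcs_exists_not_mem [T2Space X] (hcr : ∀ x : X, ¬ IsOpen ({x} : Set X))
    {S V : Set X} (hS : IsNTCS S) (hV : IsOpen V) (hne : V.Nonempty) :
    (V \ S).Nonempty := by
  by_contra h
  have hVS : V ⊆ S := fun z hz => by
    by_contra hzS; exact h ⟨z, hz, hzS⟩
  obtain ⟨x, L, hinj, htend, hL, rfl⟩ := hS
  by_cases hk : ∃ k, x k ∈ V
  · obtain ⟨k, hkV⟩ := hk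
    have hxkL : x k ≠ L := fun h' => hL ⟨k, h'⟩
    obtain ⟨P, Q, hP, hQ, hxP, hLQ, hPQ⟩ := t2_separation hxkL
    obtain ⟨N, hN⟩ := eventually_atTop.mp (htend (hQ.mem_nhds hLQ))
    have hFfin : ((x '' Set.Iio N) \ {x k} ∪ {L}).Finite :=
      (((Set.finite_Iio N).image x).diff).union (Set.finite_singleton L)
    have hWopen : IsOpen ((P ∩ V) \ ((x '' Set.Iio N) \ {x k} ∪ {L})) :=
      (hP.inter hV).sdiff hFfin.isClosed
    have hxkW : x k ∈ (P ∩ V) \ ((x '' Set.Iio N) \ {x k} ∪ {L}) := by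
      refine ⟨⟨hxP, hkV⟩, ?_⟩
      rintro (h1 | h2)
      · exact h1.2 rfl
      · exact hxkL h2
    have hWsub : (P ∩ V) \ ((x '' Set.Iio N) \ {x k} ∪ {L}) ⊆ {x k} := by
      rintro z ⟨⟨hzP, hzV⟩, hzF⟩
      rcases hVS hzV with ⟨j, rfl⟩ | hzL
      · by_cases hjN : N ≤ j
        · exact absurd (hN j hjN) (Set.disjoint_left.mp hPQ hzP)
        · by_cases hjk : x j = x k
          · exact hjk
          · exact absurd (Or.inl ⟨⟨j, Set.mem_Iio.mpr (by omega), rfl⟩, hjk⟩) hzF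
      · exact absurd (Or.inr hzL) hzF
    have hEq : (P ∩ V) \ ((x '' Set.Iio N) \ {x k} ∪ {L}) = {x k} :=
      Set.Subset.antisymm hWsub (Set.singleton_subset_iff.mpr hxkW)
    exact hcr (x k) (hEq ▸ hWopen)
  · push_neg at hk
    obtain ⟨v, hv⟩ := hne
    have hvL : v = L := by
      rcases hVS hv with ⟨j, rfl⟩ | hvL
      · exact absurd hv (hk j)
      · exact hvL
    have hVL : V = {L} := by
      apply Set.Subset.antisymm
      · intro z hz
        rcases hVS hz with ⟨j, rfl⟩ | hzL
        · exact absurd hz (hk j)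
        · exact hzL
      · intro z hz
        rw [Set.mem_singleton_iff] at hz
        rw [hz, ← hvL]; exact hv
    exact hcr L (hVL ▸ hV)

lemma ntcs_add [T2Space X] (hcr : ∀ x : X, ¬ IsOpen ({x} : Set X))
    {S V : Set X} (hS : IsNTCS S) (hV : IsOpen V) (hne : V.Nonempty) (n : ℕ) :
    ∃ F : Finset X, ↑F ⊆ V ∧ F.card = n ∧ IsNTCS (S ∪ ↑F) := by
  classical
  induction n with
  | zero => exact ⟨∅, by simp, by simp, by simpa using hS⟩
  | succ m ih =>
    obtain ⟨F, hFV, hcard, hSF⟩ := ih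
    obtain ⟨y, hyV, hyS⟩ := ntcs_exists_not_mem hcr hSF hV hne
    have hyF : y ∉ F := fun h => hyS (Or.inr h)
    refine ⟨insert y F, ?_, ?_, ?_⟩
    · rw [Finset.coe_insert]; exact Set.insert_subset hyV hFV
    · rw [Finset.card_insert_of_notMem hyF, hcard]
    · have h : (S ∪ ↑(insert y F) : Set X) = insert y (S ∪ ↑F) := by
        rw [Finset.coe_insert, Set.union_insert]
      rw [h]
      exact ntcs_insert_point hSF hyS

lemma dense_Dn [T2Space X] (hcr : ∀ x : X, ¬ IsOpen ({x} : Set X))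
    {C P : Set X} (hP : IsOpen P) (hCP : C ⊆ P) (n : ℕ) :
    Dense (Subtype.val ⁻¹' (Dn C P n) : Set (Sc X)) := by
  classical
  rw [dense_iff_inter_open]
  rintro U hU hUne
  obtain ⟨V, hV, rfl⟩ := isOpen_induced_iff.mp hU
  obtain ⟨⟨S, hS⟩, hSV⟩ := hUne
  rw [Set.mem_preimage] at hSV
  by_cases hSC : S ∩ C = ∅
  · exact ⟨⟨S, hS⟩, hSV, Set.mem_union_left _ hSC⟩
  obtain ⟨xc, hxc⟩ := Set.nonempty_iff_ne_empty.mpr hSC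
  have hbasis := TopologicalSpace.isTopologicalBasis_of_subbasis
    (t := vietoris X) rfl
  obtain ⟨bb, hbb, hSb, hbV⟩ := hbasis.exists_subset_of_mem_open hSV hV
  obtain ⟨f, ⟨hffin, hfsub⟩, rfl⟩ := hbb
  set u : Set (Set X) → Set X := fun t =>
    if h : ∃ U, IsOpen U ∧ t = {K : Set X | K ⊆ U} then h.choose else Set.univ with hu
  have huo : ∀ t, IsOpen (u t) := by
    intro t; rw [hu]; dsimp only
    split
    next h => exact h.choose_spec.1
    next => exact isOpen_univ
  have hut : ∀ t, (∃ U, IsOpen U ∧ t = {K : Set X | K ⊆ U}) →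
      t = {K : Set X | K ⊆ u t} := by
    intro t h
    rw [hu]; dsimp only
    rw [dif_pos h]
    exact h.choose_spec.2
  have huS : ∀ t ∈ f, S ⊆ u t := by
    intro t ht
    by_cases h : ∃ U, IsOpen U ∧ t = {K : Set X | K ⊆ U}
    · have hSt : S ∈ t := Set.mem_sInter.mp hSb t ht
      rw [hut t h] at hSt
      exact hSt
    · rw [hu]; dsimp only; rw [dif_neg h]; exact Set.subset_univ _
  set N : Set X := P ∩ ⋂ t ∈ f, u t with hN
  have hNopen : IsOpen N := hP.inter (hffin.isOpen_biInter fun t _ => huo t)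
  have hxN : xc ∈ N :=
    ⟨hCP hxc.2, Set.mem_biInter fun t ht => huS t ht hxc.1⟩
  obtain ⟨F, hFN, hcard, hSF⟩ := ntcs_add hcr hS hNopen ⟨xc, hxN⟩ n
  obtain ⟨W, hW, hWd⟩ := F.finite_toSet.t2_separation
  have e : Fin n ≃ {z // z ∈ F} := (F.equivFin.trans (finCongr hcard)).symm
  set B : Fin n → Set X := fun i => W ((e i : X)) ∩ P with hB
  have hS'Dn : (S ∪ ↑F : Set X) ∈ Dn C P n := by
    refine Set.mem_union_right _ ?_
    rw [Set.mem_iUnion]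
    refine ⟨B, ?_⟩
    rw [Set.mem_iUnion]
    refine ⟨⟨fun i => ⟨((hW _).2).inter hP, Set.inter_subset_right⟩, ?_⟩, ?_⟩
    · intro i j hij
      have hij' : ((e i : X)) ≠ ((e j : X)) := by
        intro hEq
        exact hij (e.injective (Subtype.ext hEq))
      exact Disjoint.mono Set.inter_subset_left Set.inter_subset_left
        (hWd (e i).2 (e j).2 hij')
    · rw [Set.mem_iInter]
      intro i
      refine ⟨(e i : X), Or.inr (e i).2, (hW _).1, (hFN (e i).2).1⟩
  have hS'f : (S ∪ ↑F : Set X) ∈ ⋂₀ f := by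
    rw [Set.mem_sInter]
    intro t ht
    rcases hfsub ht with h | ⟨U', hU', rfl⟩
    · rw [hut t h]
      intro z hz
      rcases hz with hz | hz
      · exact huS t ht hz
      · exact Set.mem_iInter₂.mp (hFN hz).2 t ht
    · obtain ⟨z, hz⟩ := Set.mem_sInter.mp hSb _ ht
      exact ⟨z, Or.inl hz.1, hz.2⟩
  exact ⟨⟨S ∪ ↑F, hSF⟩, hbV hS'f, hS'Dn⟩

lemma limit_in_closure {S : Set X} {x : ℕ → X} {L : X} {P : Set X}
    (htend : Tendsto x atTop (𝓝 L)) (hSeq : S = Set.range x ∪ {L})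
    (h : ∀ n : ℕ, ∃ B : Fin n → Set X,
      ((∀ i, IsOpen (B i) ∧ B i ⊆ P) ∧ Pairwise (Function.onFun Disjoint B)) ∧
      ∀ i, (S ∩ B i).Nonempty) :
    L ∈ closure P := by
  classical
  have hinf : (S ∩ P).Infinite := by
    intro hfin
    obtain ⟨B, ⟨hBo, hBd⟩, hBne⟩ := h (hfin.toFinset.card + 1)
    choose p hp using hBne
    have hpinj : Function.Injective p := by
      intro i j hij
      by_contra hne
      exact Set.disjoint_left.mp (hBd hne) (hp i).2 (hij ▸ (hp j).2)
    have hmem : ∀ i, p i ∈ S ∩ P := fun i => ⟨(hp i).1, (hBo i).2 (hp i).2⟩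
    have hc : (Finset.univ.image p).card = hfin.toFinset.card + 1 := by
      rw [Finset.card_image_of_injective _ hpinj, Finset.card_univ, Fintype.card_fin]
    have hsub : Finset.univ.image p ⊆ hfin.toFinset := by
      intro z hz
      obtain ⟨i, _, rfl⟩ := Finset.mem_image.mp hz
      exact hfin.mem_toFinset.mpr (hmem i)
    have := Finset.card_le_card hsub
    omega
  have hI : {k | x k ∈ P}.Infinite := by
    intro hIfin
    apply hinf
    have hsub : S ∩ P ⊆ (x '' {k | x k ∈ P}) ∪ {L} := by
      rintro z ⟨hzS, hzP⟩
      rw [hSeq] at hzS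
      rcases hzS with ⟨k, rfl⟩ | hzL
      · exact Or.inl ⟨k, hzP, rfl⟩
      · exact Or.inr hzL
    exact ((hIfin.image x).union (Set.finite_singleton L)).subset hsub
  exact mem_closure_of_frequently_of_tendsto
    (Nat.frequently_atTop_iff_infinite.mpr hI) htend

end ScAux

open ScAux

theorem stmt_9 {X : Type*} [TopologicalSpace X] [T2Space X] [RegularSpace X]
    (hcrowded : ∀ x : X, ¬ IsOpen ({x} : Set X))
    (hne : (Sc X).Nonempty) :
    ¬ BaireSpace (Sc X) := by
  intro hB
  obtain ⟨S₀, hS₀mem⟩ := hne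
  obtain ⟨x₀, L₀, hinj₀, htend₀, hL₀, hS₀eq⟩ := id hS₀mem
  have hab : x₀ 0 ≠ x₀ 1 := fun h => by simpa using hinj₀ h
  obtain ⟨H₀, H₁, hH₀, hH₁, haH, hbH, hHd⟩ := t2_separation hab
  have shrink : ∀ (H : Set X) (z : X), IsOpen H → z ∈ H →
      ∃ G, IsOpen G ∧ z ∈ G ∧ closure G ⊆ H := by
    intro H z hH hz
    obtain ⟨t, htm, htc, hts⟩ := exists_mem_nhds_isClosed_subset (hH.mem_nhds hz)
    exact ⟨interior t, isOpen_interior, mem_interior_iff_mem_nhds.mpr htm,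
      (closure_minimal interior_subset htc).trans hts⟩
  obtain ⟨P₀, hP₀, haP₀, hP₀H⟩ := shrink H₀ (x₀ 0) hH₀ haH
  obtain ⟨A, hA, haA, hAP₀⟩ := shrink P₀ (x₀ 0) hP₀ haP₀
  obtain ⟨P₁, hP₁, hbP₁, hP₁H⟩ := shrink H₁ (x₀ 1) hH₁ hbH
  obtain ⟨Bo, hBo, hbBo, hBP₁⟩ := shrink P₁ (x₀ 1) hP₁ hbP₁
  set g : ℕ → Set (Sc X) := fun n =>
    Subtype.val ⁻¹' (Dn (closure A) P₀ n) ∩ Subtype.val ⁻¹' (Dn (closure Bo) P₁ n)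
    with hg
  have hgo : ∀ n, IsOpen (g n) := fun n =>
    ((isOpen_Dn isClosed_closure n).preimage continuous_subtype_val).inter
      ((isOpen_Dn isClosed_closure n).preimage continuous_subtype_val)
  have hgd : ∀ n, Dense (g n) := fun n =>
    (dense_Dn hcrowded hP₀ hAP₀ n).inter_of_isOpen_left
      (dense_Dn hcrowded hP₁ hBP₁ n)
      ((isOpen_Dn isClosed_closure n).preimage continuous_subtype_val)
  have hdense := hB.baire_property g hgo hgd
  have hOopen : IsOpen ((Subtype.val ⁻¹' {K : Set X | (K ∩ A).Nonempty} ∩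
      Subtype.val ⁻¹' {K : Set X | (K ∩ Bo).Nonempty}) : Set (Sc X)) :=
    ((isOpen_hit _ hA).preimage continuous_subtype_val).inter
      ((isOpen_hit _ hBo).preimage continuous_subtype_val)
  have hS₀A : (S₀ ∩ A).Nonempty := ⟨x₀ 0, by rw [hS₀eq]; exact Or.inl ⟨0, rfl⟩, haA⟩
  have hS₀B : (S₀ ∩ Bo).Nonempty := ⟨x₀ 1, by rw [hS₀eq]; exact Or.inl ⟨1, rfl⟩, hbBo⟩
  have hOne : ((Subtype.val ⁻¹' {K : Set X | (K ∩ A).Nonempty} ∩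
      Subtype.val ⁻¹' {K : Set X | (K ∩ Bo).Nonempty}) : Set (Sc X)).Nonempty :=
    ⟨⟨S₀, hS₀mem⟩, hS₀A, hS₀B⟩
  obtain ⟨⟨S, hSmem⟩, hSO, hSg⟩ :=
    dense_iff_inter_open.mp hdense _ hOopen hOne
  obtain ⟨x, L, hinj, htend, hL, hSeq⟩ := id hSmem
  have key : ∀ (Cc Pp : Set X), (S ∩ Cc).Nonempty →
      (∀ n, S ∈ Dn Cc Pp n) → L ∈ closure Pp := by
    intro Cc Pp hCcne h
    apply limit_in_closure htend hSeq
    intro n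
    rcases h n with h1 | h2
    · exact absurd h1 (Set.nonempty_iff_ne_empty.mp hCcne)
    · obtain ⟨B, hB⟩ := Set.mem_iUnion.mp h2
      obtain ⟨hBp, hBmem⟩ := Set.mem_iUnion.mp hB
      exact ⟨B, hBp, fun i => Set.mem_iInter.mp hBmem i⟩
  have hSA : (S ∩ closure A).Nonempty := by
    obtain ⟨z, hz⟩ := hSO.1
    exact ⟨z, hz.1, subset_closure hz.2⟩
  have hSB : (S ∩ closure Bo).Nonempty := by
    obtain ⟨z, hz⟩ := hSO.2
    exact ⟨z, hz.1, subset_closure hz.2⟩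
  have h0 : L ∈ closure P₀ :=
    key (closure A) P₀ hSA (fun n => (Set.mem_iInter.mp hSg n).1)
  have h1 : L ∈ closure P₁ :=
    key (closure Bo) P₁ hSB (fun n => (Set.mem_iInter.mp hSg n).2)
  exact Set.disjoint_left.mp hHd (hP₀H h0) (hP₁H h1)
end

section
/- In any topological space Y, the union of an arbitrary family of open subsets each of which is meager in Y is itself meager in Y (Banach Category Theorem). -/
open Set

lemma IsNowhereDense.isMeagre' {Y : Type*} [TopologicalSpace Y] {t : Set Y}
    (h : IsNowhereDense t) : IsMeagre t :=
  isMeagre_iff_countable_union_isNowhereDense.mpr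
    ⟨{t}, by simpa using h, countable_singleton _, by simp⟩

lemma isMeagre_union' {Y : Type*} [TopologicalSpace Y] {a b : Set Y}
    (ha : IsMeagre a) (hb : IsMeagre b) : IsMeagre (a ∪ b) := by
  rw [IsMeagre, compl_union]
  exact Filter.inter_mem ha hb

theorem stmt_10 {Y : Type*} [TopologicalSpace Y] {ι : Sort*} (s : ι → Set Y)
    (hopen : ∀ i, IsOpen (s i)) (hmeagre : ∀ i, IsMeagre (s i)) :
    IsMeagre (⋃ i, s i) := by
  rcases isEmpty_or_nonempty ι with hι | hι
  · simpa [iUnion_of_empty] using IsMeagre.empty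
  -- Step 1: write each s i as a countable union of nowhere dense sets
  have hseq : ∀ i, ∃ f : ℕ → Set Y, (∀ n, IsNowhereDense (f n)) ∧ s i ⊆ ⋃ n, f n := by
    intro i
    obtain ⟨S, hSnd, hScnt, hScov⟩ :=
      isMeagre_iff_countable_union_isNowhereDense.mp (hmeagre i)
    rcases S.eq_empty_or_nonempty with rfl | hSne
    · exact ⟨fun _ => ∅, fun _ => isNowhereDense_empty, by simpa using hScov⟩
    · obtain ⟨g, rfl⟩ := hScnt.exists_eq_range hSne
      exact ⟨g, fun n => hSnd _ (mem_range_self n), by rwa [sUnion_range] at hScov⟩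
  choose f hf1 hf2 using hseq
  -- Step 2: Zorn's lemma, maximal pairwise disjoint family of open subsets of the s i
  set 𝔖 : Set (Set (Set Y)) :=
    {F | (∀ V ∈ F, IsOpen V ∧ ∃ i, V ⊆ s i) ∧ F.PairwiseDisjoint id} with h𝔖
  obtain ⟨M, hM⟩ : ∃ M, Maximal (· ∈ 𝔖) M := by
    apply zorn_subset
    intro c hc hchain
    refine ⟨⋃₀ c, ⟨?_, ?_⟩, fun t ht => subset_sUnion_of_mem ht⟩
    · rintro V ⟨F, hF, hVF⟩
      exact (hc hF).1 V hVF
    · rintro V ⟨F, hF, hVF⟩ V' ⟨F', hF', hVF'⟩ hne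
      rcases hchain.total hF hF' with h | h
      · exact (hc hF').2 (h hVF) hVF' hne
      · exact (hc hF).2 hVF (h hVF') hne
  have hMmem : ∀ V ∈ M, IsOpen V ∧ ∃ i, V ⊆ s i := hM.1.1
  have hMdisj : M.PairwiseDisjoint id := hM.1.2
  have hMidx : ∀ V, ∃ i, V ∈ M → V ⊆ s i := by
    intro V
    by_cases hV : V ∈ M
    · obtain ⟨i, hi⟩ := (hMmem V hV).2
      exact ⟨i, fun _ => hi⟩
    · exact ⟨Classical.arbitrary ι, fun h => absurd h hV⟩
  choose idx hidx using hMidx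
  set W : Set Y := ⋃₀ M with hW
  have hWopen : IsOpen W := isOpen_sUnion fun V hV => (hMmem V hV).1
  -- Step 3: ⋃ i, s i ⊆ closure W
  have hcl : (⋃ i, s i) ⊆ closure W := by
    rintro x ⟨_, ⟨i, rfl⟩, hx⟩
    by_contra hxc
    set V : Set Y := s i ∩ (closure W)ᶜ with hVdef
    have hVopen : IsOpen V := (hopen i).inter (isClosed_closure.isOpen_compl)
    have hxV : x ∈ V := ⟨hx, hxc⟩
    have hins : insert V M ∈ 𝔖 := by
      constructor
      · rintro V' (rfl | hV')
        · exact ⟨hVopen, i, inter_subset_left⟩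
        · exact hMmem V' hV'
      · intro A hA B hB hAB
        have hdisjVM : ∀ C ∈ M, Disjoint V C := by
          intro C hC
          refine Set.disjoint_left.mpr fun y hyV hyC => ?_
          exact hyV.2 (subset_closure (⟨C, hC, hyC⟩ : y ∈ W))
        rcases hA with rfl | hA <;> rcases hB with rfl | hB
        · exact absurd rfl hAB
        · exact hdisjVM B hB
        · exact (hdisjVM A hA).symm
        · exact hMdisj hA hB hAB
    have : V ∈ M := hM.2 hins (subset_insert V M) (mem_insert V M)
    exact hxc (subset_closure ⟨V, this, hxV⟩)
  -- closure W \ W is nowhere dense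
  have hnd1 : IsNowhereDense (closure W \ W) := by
    rw [IsClosed.isNowhereDense_iff (isClosed_closure.sdiff hWopen)]
    rw [eq_empty_iff_forall_notMem]
    intro x hx
    have hG : IsOpen (interior (closure W \ W)) := isOpen_interior
    have hxcl : x ∈ closure W := (interior_subset hx).1
    obtain ⟨y, hyG, hyW⟩ := mem_closure_iff.mp hxcl _ hG hx
    exact (interior_subset hyG).2 hyW
  -- each N n is nowhere dense
  set N : ℕ → Set Y := fun n => ⋃ V ∈ M, V ∩ f (idx V) n with hN
  have hnd2 : ∀ n, IsNowhereDense (N n) := by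
    intro n
    rw [IsNowhereDense, eq_empty_iff_forall_notMem]
    intro x hx
    have hG : IsOpen (interior (closure (N n))) := isOpen_interior
    obtain ⟨y, hyG, hyN⟩ := mem_closure_iff.mp (interior_subset hx) _ hG hx
    obtain ⟨_, ⟨V, rfl⟩, hy2⟩ := hyN
    simp only [mem_iUnion] at hy2
    obtain ⟨hVM, hyV, hyf⟩ := hy2
    -- O := interior (closure (N n)) ∩ V is open nonempty, contained in closure (f (idx V) n)
    have hO : IsOpen (interior (closure (N n)) ∩ V) := hG.inter (hMmem V hVM).1
    have hOsub : interior (closure (N n)) ∩ V ⊆ closure (f (idx V) n) := by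
      intro z hz
      rw [mem_closure_iff]
      intro P hP hzP
      have hQ : IsOpen (P ∩ (interior (closure (N n)) ∩ V)) := hP.inter hO
      have hzQ : z ∈ P ∩ (interior (closure (N n)) ∩ V) := ⟨hzP, hz⟩
      obtain ⟨w, hwQ, hwN⟩ := mem_closure_iff.mp (interior_subset hz.1) _ hQ hzQ
      obtain ⟨_, ⟨V', rfl⟩, hw2⟩ := hwN
      simp only [mem_iUnion] at hw2
      obtain ⟨hV'M, hwV', hwf⟩ := hw2
      have hVV' : V = V' := by
        by_contra hne
        exact Set.disjoint_left.mp (hMdisj hVM hV'M hne) hwQ.2.2 hwV'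
      exact ⟨w, hwQ.1, hVV' ▸ hwf⟩
    have : interior (closure (N n)) ∩ V ⊆ interior (closure (f (idx V) n)) :=
      hO.subset_interior_iff.mpr hOsub
    rw [hf1 (idx V) n] at this
    exact this ⟨hyG, hyV⟩
  -- Step 4: conclude
  have hsub : (⋃ i, s i) ⊆ (closure W \ W) ∪ ⋃ n, N n := by
    intro x hx
    by_cases hxW : x ∈ W
    · obtain ⟨V, hVM, hxV⟩ := hxW
      have := hf2 (idx V) (hidx V hVM hxV)
      obtain ⟨_, ⟨n, rfl⟩, hxn⟩ := this
      refine Or.inr ⟨_, ⟨n, rfl⟩, ?_⟩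
      exact mem_biUnion hVM ⟨hxV, hxn⟩
    · exact Or.inl ⟨hcl hx, hxW⟩
  exact (isMeagre_union' hnd1.isMeagre' (isMeagre_iUnion fun n => (hnd2 n).isMeagre')).mono hsub
end
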